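/- For pairwise distinct x_1,...,x_n in a field, the sum over i of the Lagrange-type expressions recovers the identity Σ_{j=1}^{n} (-1)^{n-i} e_{n-i}(x̂_j) x_j^{m-1} / ∏_{k≠j}(x_j - x_k) = δ_{i,m} for 1 ≤ i, m ≤ n (entries of V^{-1} V = I). -/

import Mathlib

/-- The `k`-th elementary symmetric polynomial of `x_0, …, x_{m-1}`. -/
def esymmAux {R : Type*} [CommRing R] {m : ℕ} (x : Fin m → R) (k : ℕ) : R :=
  ∑ s ∈ Finset.powersetCard k Finset.univ, ∏ i ∈ s, x i

open Polynomial Finset Lagrange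

lemma erase_eq_map_succAbove (n : ℕ) (j : Fin (n+1)) :
    (Finset.univ.erase j) =
      Finset.univ.map ⟨j.succAbove, j.succAbove_right_injective⟩ := by
  ext k
  simp only [Finset.mem_erase, Finset.mem_univ, and_true, Finset.mem_map,
    Function.Embedding.coeFn_mk, true_and]
  constructor
  · intro h; exact Fin.exists_succAbove_eq h
  · rintro ⟨a, rfl⟩; exact j.succAbove_ne a

lemma esymm_erase (n : ℕ) {F : Type*} [Field F] (x : Fin (n+1) → F) (j : Fin (n+1)) (k : ℕ) :
    ((Finset.univ.erase j).val.map x).esymm k = esymmAux (x ∘ j.succAbove) k := by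
  rw [erase_eq_map_succAbove, Finset.map_val, Multiset.map_map]
  exact Finset.esymm_map_val (x ∘ j.succAbove) Finset.univ k

lemma coeff_nodal_erase (n : ℕ) {F : Type*} [Field F] (x : Fin (n+1) → F) (j : Fin (n+1))
    (i : Fin (n+1)) :
    (nodal (Finset.univ.erase j) x).coeff i =
      (-1 : F) ^ (n - (i : ℕ)) * esymmAux (x ∘ j.succAbove) (n - (i : ℕ)) := by
  have hcard : Multiset.card ((Finset.univ.erase j).val.map x) = n := by
    simp [Finset.card_erase_of_mem]
  have hi : (i : ℕ) ≤ Multiset.card ((Finset.univ.erase j).val.map x) := by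
    rw [hcard]; exact Nat.lt_succ_iff.mp i.isLt
  have := Multiset.prod_X_sub_C_coeff ((Finset.univ.erase j).val.map x) hi
  rw [hcard, esymm_erase] at this
  rw [← this, nodal]
  congr 1
  rw [Finset.prod, Multiset.map_map]
  rfl

/-- the entries of `V⁻¹ V = I`:
`Σ_j (-1)^{n-i} e_{n-i}(x̂_j) x_j^{m} / ∏_{k≠j}(x_j - x_k) = δ_{i,m}`
(size `n+1`, `0`-based indices `i, m`). -/
theorem stmt18 {F : Type*} [Field F] (n : ℕ) (x : Fin (n+1) → F)
    (hx : Function.Injective x) (i m : Fin (n+1)) :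
    (∑ j : Fin (n+1),
        (-1 : F) ^ (n - (i : ℕ)) * esymmAux (x ∘ j.succAbove) (n - (i : ℕ)) *
          x j ^ (m : ℕ) / ∏ k ∈ Finset.univ.erase j, (x j - x k))
      = if i = m then 1 else 0 := by
  have hinj : Set.InjOn x (Finset.univ : Finset (Fin (n+1))) := hx.injOn
  have hdeg : ((X : F[X]) ^ (m : ℕ)).degree < (Finset.univ : Finset (Fin (n+1))).card := by
    rw [degree_X_pow, Finset.card_univ, Fintype.card_fin]
    exact_mod_cast m.isLt
  have hI : (X : F[X]) ^ (m : ℕ) =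
      interpolate Finset.univ x (fun j => x j ^ (m : ℕ)) := by
    have := eq_interpolate (f := (X : F[X]) ^ (m : ℕ)) hinj hdeg
    simpa [eval_pow] using this
  have hc := congrArg (fun p : F[X] => p.coeff i) hI
  simp only [coeff_X_pow] at hc
  rw [show (if i = m then (1:F) else 0) = (if (i:ℕ) = (m:ℕ) then (1:F) else 0) by
    simp [Fin.ext_iff]]
  rw [hc, interpolate_apply, finset_sum_coeff]
  refine Finset.sum_congr rfl fun j _ => ?_
  rw [coeff_C_mul, basis_eq_prod_sub_inv_mul_nodal_div (Finset.mem_univ j),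
    ← nodal_erase_eq_nodal_div (Finset.mem_univ j), coeff_C_mul, coeff_nodal_erase,
    nodalWeight, Finset.prod_inv_distrib, div_eq_mul_inv]
  ring
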